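/- Consider the planar system ẋ = -αx + βλ·sign(x)·min(|x|,1), λ̇ = g(x,λ) where g is continuous, g ≤ 0, and g(x,λ) ≥ -γ(x² + λ²), with α, β, γ > 0. Suppose k ∈ (0, α/β) and a = [(kα/2 - k²β/2)/(γ(1+k²))]² > 0. Then the set Ω_a = {(x,λ) : 0 ≤ λ ≤ k√a, λ ≥ k|x|, x² ≤ a} is forward invariant. -/

import Mathlib

set_option maxHeartbeats 1000000 in
private lemma stmt12_aux (α β γ k A E X L S M mn G : ℝ)
    (hα : 0 < α) (hβ : 0 < β) (hγ : 0 < γ) (hk : 0 < k)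
    (hAnum : 0 < k * α / 2 - k ^ 2 * β / 2)
    (hgkey : γ * (1 + k ^ 2) * A = k * α / 2 - k ^ 2 * β / 2)
    (hSX : S * X = M) (hSS0 : 0 ≤ S * S) (hSS1 : S * S ≤ 1)
    (hmn0 : 0 ≤ mn) (hmn1 : mn ≤ 1)
    (hM0 : 0 ≤ M) (hMA : M ≤ A)
    (hXM : X ^ 2 = M ^ 2)
    (hL : L = k * M - E)
    (hG : -γ * (X ^ 2 + L ^ 2) ≤ G)
    (hE : 0 < E) (hγE : γ * E < 1) :
    k * (S * (-α * X + β * L * S * mn)) - G < E := by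
  have hLub : L ≤ k * M := by nlinarith
  have hLlb : -E ≤ L := by nlinarith [mul_nonneg hk.le hM0]
  have hpart : L * ((S * S) * mn) ≤ k * M := by
    rcases le_or_gt L 0 with h | h
    · have h1 : 0 ≤ (S * S) * mn := mul_nonneg hSS0 hmn0
      have h2 : L * ((S * S) * mn) ≤ 0 := mul_nonpos_of_nonpos_of_nonneg h h1
      nlinarith [mul_nonneg hk.le hM0]
    · have h1 : (S * S) * mn ≤ 1 := by nlinarith
      have h3 : L * ((S * S) * mn) ≤ L * 1 := mul_le_mul_of_nonneg_left h1 h.le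
      nlinarith
  have hLsq : L ^ 2 ≤ E ^ 2 + k ^ 2 * M ^ 2 := by
    rcases le_or_gt L 0 with h | h
    · nlinarith [mul_nonneg (by linarith : (0:ℝ) ≤ E + L)
        (by linarith : (0:ℝ) ≤ E - L), sq_nonneg (k * M)]
    · nlinarith [mul_nonneg (by linarith : (0:ℝ) ≤ k * M - L)
        (by linarith : (0:ℝ) ≤ k * M + L), sq_nonneg E]
  have hM2 : M ^ 2 ≤ A * M := by nlinarith
  have hrw : k * (S * (-α * X + β * L * S * mn))
      = -(k * α) * (S * X) + (k * β) * (L * ((S * S) * mn)) := by ring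
  have hb : (k * β) * (L * ((S * S) * mn)) ≤ (k * β) * (k * M) :=
    mul_le_mul_of_nonneg_left hpart (by positivity)
  have hGb : -G ≤ γ * X ^ 2 + γ * L ^ 2 := by nlinarith
  have hE2 : γ * E ^ 2 < E := by nlinarith
  have hmono : 0 ≤ (k * α / 2 - k ^ 2 * β / 2) * M := mul_nonneg hAnum.le hM0
  have f3 : γ * X ^ 2 = γ * M ^ 2 := by rw [hXM]
  have f4 : γ * M ^ 2 ≤ γ * (A * M) := mul_le_mul_of_nonneg_left hM2 hγ.le
  have f5 : γ * L ^ 2 ≤ γ * E ^ 2 + γ * (k ^ 2 * M ^ 2) := by nlinarith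
  have f6 : γ * (k ^ 2 * M ^ 2) ≤ γ * (k ^ 2 * (A * M)) := by nlinarith [hM2]
  have f7 : γ * (1 + k ^ 2) * A * M = (k * α / 2 - k ^ 2 * β / 2) * M := by
    rw [hgkey]
  rw [hrw, hSX]
  linarith [hb, hGb, f3, f4, f5, f6, f7, hE2, hmono]

set_option maxHeartbeats 1000000 in
theorem stmt_12 (α β γ k : ℝ) (hα : 0 < α) (hβ : 0 < β) (hγ : 0 < γ)
    (hk : 0 < k) (hk' : k < α / β)
    (a : ℝ) (ha : a = ((k * α / 2 - k ^ 2 * β / 2) / (γ * (1 + k ^ 2))) ^ 2)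
    (hapos : 0 < a)
    (g : ℝ → ℝ → ℝ) (hgcont : Continuous fun p : ℝ × ℝ => g p.1 p.2)
    (hgle : ∀ x lam, g x lam ≤ 0)
    (hgge : ∀ x lam, -γ * (x ^ 2 + lam ^ 2) ≤ g x lam)
    (Ωa : Set (ℝ × ℝ))
    (hΩa : Ωa = {p : ℝ × ℝ | 0 ≤ p.2 ∧ p.2 ≤ k * Real.sqrt a ∧
      k * |p.1| ≤ p.2 ∧ p.1 ^ 2 ≤ a})
    (t₀ T : ℝ) (x lam : ℝ → ℝ)
    (hode : ∀ t ∈ Set.Ico t₀ T,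
      HasDerivAt x (-α * x t + β * lam t * Real.sign (x t) * min |x t| 1) t ∧
      HasDerivAt lam (g (x t) (lam t)) t)
    (hinit : (x t₀, lam t₀) ∈ Ωa) :
    ∀ t ∈ Set.Ico t₀ T, (x t, lam t) ∈ Ωa := by
  have hkβ : k * β < α := by
    rw [lt_div_iff₀ hβ] at hk'
    linarith
  obtain ⟨A, hAdef⟩ : ∃ A : ℝ, A = (k * α / 2 - k ^ 2 * β / 2) / (γ * (1 + k ^ 2)) :=
    ⟨_, rfl⟩
  have hAnum : 0 < k * α / 2 - k ^ 2 * β / 2 := by nlinarith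
  have hden : 0 < γ * (1 + k ^ 2) := by positivity
  have hApos : 0 < A := by rw [hAdef]; exact div_pos hAnum hden
  have hAa : a = A ^ 2 := by rw [ha, hAdef]
  have hsqrt : Real.sqrt a = A := by rw [hAa, Real.sqrt_sq hApos.le]
  have hgkey : γ * (1 + k ^ 2) * A = k * α / 2 - k ^ 2 * β / 2 := by
    rw [hAdef]
    field_simp
  rw [hΩa] at hinit
  obtain ⟨hi0, hi1, hi2, hi3⟩ := hinit
  dsimp only at hi0 hi1 hi2 hi3
  rw [hsqrt] at hi1
  -- sign lemmas
  have hsx : ∀ y : ℝ, Real.sign y * y = |y| := by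
    intro y
    rcases lt_trichotomy y 0 with h | h | h
    · rw [Real.sign_of_neg h, abs_of_neg h]; ring
    · simp [h]
    · rw [Real.sign_of_pos h, abs_of_pos h]; ring
  have hss0 : ∀ y : ℝ, 0 ≤ Real.sign y * Real.sign y := fun y => mul_self_nonneg _
  have hss1 : ∀ y : ℝ, Real.sign y * Real.sign y ≤ 1 := by
    intro y
    rcases lt_trichotomy y 0 with h | h | h
    · rw [Real.sign_of_neg h]; norm_num
    · simp [h]
    · rw [Real.sign_of_pos h]; norm_num
  -- derivative of |x|
  have habs : ∀ t ∈ Set.Ico t₀ T, HasDerivAt (fun s => |x s|)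
      (Real.sign (x t) * (-α * x t + β * lam t * Real.sign (x t) * min |x t| 1)) t := by
    intro t ht
    have hx' := (hode t ht).1
    rcases eq_or_ne (x t) 0 with h0 | h0
    · have hX0 : -α * x t + β * lam t * Real.sign (x t) * min |x t| 1 = 0 := by
        simp [h0]
      rw [hX0, mul_zero]
      rw [hX0] at hx'
      rw [hasDerivAt_iff_isLittleO] at hx' ⊢
      simp only [smul_zero, sub_zero, h0, abs_zero] at hx' ⊢
      have := hx'.norm_left
      simpa [Real.norm_eq_abs] using this.congr_left (fun z => rfl)
    · have hc := (hasDerivAt_abs h0).comp t hx'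
      rcases h0.lt_or_gt with h | h
      · have : (SignType.sign (x t) : ℝ) = Real.sign (x t) := by
          rw [Real.sign_of_neg h]; simp [h]
        rw [this] at hc
        exact hc
      · have : (SignType.sign (x t) : ℝ) = Real.sign (x t) := by
          rw [Real.sign_of_pos h]; simp [h]
        rw [this] at hc
        exact hc
  -- Step 1 : lam is bounded above by lam t₀
  have L1 : ∀ t ∈ Set.Ico t₀ T, lam t ≤ lam t₀ := by
    rintro t₁ ⟨ht₁0, ht₁T⟩
    have hsub : Set.Icc t₀ t₁ ⊆ Set.Ico t₀ T := fun s hs => ⟨hs.1, lt_of_le_of_lt hs.2 ht₁T⟩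
    have hsub' : Set.Ico t₀ t₁ ⊆ Set.Ico t₀ T := fun s hs => ⟨hs.1, lt_trans hs.2 ht₁T⟩
    have := image_le_of_deriv_right_le_deriv_boundary
      (f := lam) (f' := fun s => g (x s) (lam s)) (a := t₀) (b := t₁)
      (B := fun _ => lam t₀) (B' := fun _ => 0)
      (fun s hs => ((hode s (hsub hs)).2).continuousAt.continuousWithinAt)
      (fun s hs => ((hode s (hsub' hs)).2).hasDerivWithinAt)
      le_rfl continuousOn_const
      (fun s _ => (hasDerivAt_const s (lam t₀)).hasDerivWithinAt)
      (fun s _ => hgle _ _)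
    exact this ⟨ht₁0, le_rfl⟩
  -- Step 2 : x² ≤ a
  have L2 : ∀ t ∈ Set.Ico t₀ T, x t ^ 2 ≤ a := by
    rintro t₁ ⟨ht₁0, ht₁T⟩
    have hsub : Set.Icc t₀ t₁ ⊆ Set.Ico t₀ T := fun s hs => ⟨hs.1, lt_of_le_of_lt hs.2 ht₁T⟩
    have hsub' : Set.Ico t₀ t₁ ⊆ Set.Ico t₀ T := fun s hs => ⟨hs.1, lt_trans hs.2 ht₁T⟩
    have := image_le_of_deriv_right_lt_deriv_boundary'
      (f := fun s => x s ^ 2)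
      (f' := fun s => 2 * x s *
        (-α * x s + β * lam s * Real.sign (x s) * min |x s| 1))
      (a := t₀) (b := t₁) (B := fun _ => a) (B' := fun _ => 0)
      (fun s hs => (((hode s (hsub hs)).1).continuousAt.pow 2).continuousWithinAt)
      (fun s hs => by
        have h := ((hode s (hsub' hs)).1).fun_pow 2
        have : HasDerivAt (fun s => x s ^ 2)
            (2 * x s * (-α * x s + β * lam s * Real.sign (x s) * min |x s| 1)) s := by
          exact h.congr_deriv (by push_cast; ring)
        exact this.hasDerivWithinAt)
      hi3 continuousOn_const
      (fun s _ => (hasDerivAt_const s a).hasDerivWithinAt)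
      ?_
    · exact this ⟨ht₁0, le_rfl⟩
    · intro s hs hcontact
      have hsIco : s ∈ Set.Ico t₀ T := hsub' hs
      have hlam : lam s ≤ k * A := le_trans (L1 s hsIco) hi1
      have habsA : |x s| = A := by
        rw [← Real.sqrt_sq_eq_abs, hcontact, hAa, Real.sqrt_sq hApos.le]
      have hmin0 : 0 ≤ min |x s| 1 := le_min (abs_nonneg _) zero_le_one
      have hmin1 : min |x s| 1 ≤ 1 := min_le_right _ _
      have hrw : 2 * x s * (-α * x s + β * lam s * Real.sign (x s) * min |x s| 1)
          = -2 * α * x s ^ 2 + 2 * β * lam s * (Real.sign (x s) * x s) * min |x s| 1 := by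
        ring
      rw [hrw, hsx (x s), habsA, hcontact, hAa]
      rw [habsA] at hmin0 hmin1
      have h1 : lam s * min A 1 ≤ k * A := by
        rcases le_or_gt (lam s) 0 with h | h
        · have h2 : lam s * min A 1 ≤ 0 := mul_nonpos_of_nonpos_of_nonneg h hmin0
          have h3 : 0 ≤ k * A := by positivity
          linarith
        · have h2 : lam s * min A 1 ≤ lam s * 1 :=
            mul_le_mul_of_nonneg_left hmin1 h.le
          have h3 : lam s * 1 = lam s := mul_one _
          linarith
      have h2 : 2 * β * A * (lam s * min A 1) ≤ 2 * β * A * (k * A) :=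
        mul_le_mul_of_nonneg_left h1 (by positivity)
      nlinarith [mul_pos hApos hApos, h2, hkβ, hApos]
  -- Step 3 : k * |x| ≤ lam
  have L3 : ∀ t ∈ Set.Ico t₀ T, k * |x t| ≤ lam t := by
    rintro t₁ ⟨ht₁0, ht₁T⟩
    have hsub : Set.Icc t₀ t₁ ⊆ Set.Ico t₀ T := fun s hs => ⟨hs.1, lt_of_le_of_lt hs.2 ht₁T⟩
    have hsub' : Set.Ico t₀ t₁ ⊆ Set.Ico t₀ T := fun s hs => ⟨hs.1, lt_trans hs.2 ht₁T⟩
    have key : ∀ ε : ℝ, 0 < ε → γ * (ε * Real.exp (T - t₀)) < 1 →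
        k * |x t₁| - lam t₁ ≤ ε * Real.exp (t₁ - t₀) := by
      intro ε hε hεsmall
      have := image_le_of_deriv_right_lt_deriv_boundary'
        (f := fun s => k * |x s| - lam s)
        (f' := fun s => k * (Real.sign (x s) *
            (-α * x s + β * lam s * Real.sign (x s) * min |x s| 1)) - g (x s) (lam s))
        (a := t₀) (b := t₁)
        (B := fun s => ε * Real.exp (s - t₀)) (B' := fun s => ε * Real.exp (s - t₀))
        (fun s hs => ((continuousAt_const.mul (habs s (hsub hs)).continuousAt).sub
          ((hode s (hsub hs)).2).continuousAt).continuousWithinAt)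
        (fun s hs => (((habs s (hsub' hs)).const_mul k).sub
          ((hode s (hsub' hs)).2)).hasDerivWithinAt)
        (by
          show k * |x t₀| - lam t₀ ≤ ε * Real.exp (t₀ - t₀)
          have : k * |x t₀| - lam t₀ ≤ 0 := by linarith
          have h2 : (0:ℝ) < ε * Real.exp (t₀ - t₀) := by positivity
          linarith)
        ((continuous_const.mul (Real.continuous_exp.comp (continuous_id.sub continuous_const))).continuousOn)
        (fun s _ => by
          have h : HasDerivAt (fun s : ℝ => Real.exp (s - t₀)) (Real.exp (s - t₀)) s := by
            simpa [Function.comp_def] using (Real.hasDerivAt_exp (s - t₀)).comp s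
              ((hasDerivAt_id s).sub_const t₀)
          exact (h.const_mul ε).hasDerivWithinAt)
        ?_
      · exact this ⟨ht₁0, le_rfl⟩
      · intro s hs hcontact
        have hsIco : s ∈ Set.Ico t₀ T := hsub' hs
        obtain ⟨E, hE⟩ : ∃ E : ℝ, E = ε * Real.exp (s - t₀) := ⟨_, rfl⟩
        rw [← hE] at hcontact ⊢
        have hEpos : 0 < E := by rw [hE]; positivity
        have hEle : γ * E < 1 := by
          have h1 : Real.exp (s - t₀) ≤ Real.exp (T - t₀) :=
            Real.exp_le_exp.2 (by linarith [hsIco.2])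
          have h2 : ε * Real.exp (s - t₀) ≤ ε * Real.exp (T - t₀) := by nlinarith
          have h3 : γ * E ≤ γ * (ε * Real.exp (T - t₀)) := by rw [hE]; nlinarith
          linarith
        have hxA : |x s| ≤ A := by
          have hx2 := L2 s hsIco
          rw [hAa] at hx2
          nlinarith [sq_abs (x s), abs_nonneg (x s)]
        have hlamval : lam s = k * |x s| - E := by linarith [hcontact]
        have hlamub : lam s ≤ k * |x s| := by linarith [hlamval, hEpos]
        have hlamlb : -E ≤ lam s := by
          have : 0 ≤ k * |x s| := by positivity
          linarith [hlamval]
        have hmin0 : 0 ≤ min |x s| 1 := le_min (abs_nonneg _) zero_le_one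
        have hmin1 : min |x s| 1 ≤ 1 := min_le_right _ _
        exact stmt12_aux α β γ k A E (x s) (lam s) (Real.sign (x s)) (|x s|)
          (min |x s| 1) (g (x s) (lam s)) hα hβ hγ hk hAnum hgkey
          (hsx (x s)) (hss0 _) (hss1 _) hmin0 hmin1 (abs_nonneg _) hxA
          (sq_abs (x s)).symm hlamval (hgge (x s) (lam s)) hEpos hEle
    -- let ε → 0
    have hδ : ∀ δ : ℝ, 0 < δ → k * |x t₁| - lam t₁ ≤ δ := by
      intro δ hδ
      have hexpT : 0 < Real.exp (T - t₀) := Real.exp_pos _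
      obtain ⟨ε, hεdef⟩ :
          ∃ ε : ℝ, ε = min (δ / Real.exp (T - t₀)) (1 / (2 * γ * Real.exp (T - t₀))) :=
        ⟨_, rfl⟩
      have hε0 : 0 < ε := by
        rw [hεdef]; exact lt_min (by positivity) (by positivity)
      have hεs : γ * (ε * Real.exp (T - t₀)) < 1 := by
        have h1 : ε ≤ 1 / (2 * γ * Real.exp (T - t₀)) := by
          rw [hεdef]; exact min_le_right _ _
        have h2 : ε * Real.exp (T - t₀) ≤ (1 / (2 * γ * Real.exp (T - t₀)))
            * Real.exp (T - t₀) := mul_le_mul_of_nonneg_right h1 hexpT.le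
        have h3 : γ * (ε * Real.exp (T - t₀)) ≤ γ * ((1 / (2 * γ * Real.exp (T - t₀)))
            * Real.exp (T - t₀)) := mul_le_mul_of_nonneg_left h2 hγ.le
        have h4 : γ * ((1 / (2 * γ * Real.exp (T - t₀))) * Real.exp (T - t₀)) = 1/2 := by
          field_simp
        linarith
      have h := key ε hε0 hεs
      have h2 : ε * Real.exp (t₁ - t₀) ≤ δ := by
        have hm : Real.exp (t₁ - t₀) ≤ Real.exp (T - t₀) := Real.exp_le_exp.2 (by linarith)
        have h1 : ε ≤ δ / Real.exp (T - t₀) := by rw [hεdef]; exact min_le_left _ _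
        have : ε * Real.exp (t₁ - t₀) ≤ (δ / Real.exp (T - t₀)) * Real.exp (T - t₀) := by
          nlinarith [Real.exp_pos (t₁ - t₀)]
        have : (δ / Real.exp (T - t₀)) * Real.exp (T - t₀) = δ := by field_simp
        linarith
      linarith
    by_contra hcon
    push_neg at hcon
    have := hδ ((k * |x t₁| - lam t₁) / 2) (by linarith)
    linarith
  -- conclusion
  intro t ht
  rw [hΩa]
  refine ⟨?_, ?_, L3 t ht, L2 t ht⟩
  · have := L3 t ht
    have h2 : 0 ≤ k * |x t| := by positivity
    linarith
  · rw [hsqrt]; exact le_trans (L1 t ht) hi1
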